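/- Fix x ∈ (0,π]. If Δ : [0,x] → Matrix N N ℝ is continuous and satisfies the homogeneous integral equation Δ(y) + ∫₀ˣ Δ(t)·F(t,y) dt = 0 for all y ∈ [0,x], then Δ is identically zero on [0,x]. -/

import Mathlib

open Matrix MeasureTheory Set Filter

attribute [local instance] Matrix.normedAddCommGroup Matrix.normedSpace

open Topology in
lemma aux_tendsto_integral_of_unif {ι : Type*} {l : Filter ι} {G : ι → ℝ → ℝ} {g : ℝ → ℝ}
    {a b : ℝ} (hab : a ≤ b) (hGi : ∀ s, IntervalIntegrable (G s) volume a b)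
    (hgi : IntervalIntegrable g volume a b)
    (h : TendstoUniformlyOn G g l (Icc a b)) :
    Tendsto (fun s => ∫ t in a..b, G s t) l (𝓝 (∫ t in a..b, g t)) := by
  rw [Metric.tendsto_nhds]
  intro ε hε
  have hba : 0 ≤ b - a := sub_nonneg.2 hab
  have hδ : 0 < ε / (b - a + 1) := by positivity
  filter_upwards [Metric.tendstoUniformlyOn_iff.1 h (ε / (b - a + 1)) hδ] with s hs
  have hb : ∀ t ∈ Set.uIoc a b, ‖G s t - g t‖ ≤ ε / (b - a + 1) := by
    intro t ht
    rw [Set.uIoc_of_le hab] at ht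
    have := hs t (Set.Ioc_subset_Icc_self ht)
    rw [Real.dist_eq, abs_sub_comm] at this
    exact this.le
  have h1 : (∫ t in a..b, G s t) - ∫ t in a..b, g t = ∫ t in a..b, (G s t - g t) :=
    (intervalIntegral.integral_sub (hGi s) hgi).symm
  rw [Real.dist_eq, h1]
  calc |∫ t in a..b, (G s t - g t)| ≤ (ε / (b - a + 1)) * |b - a| :=
        intervalIntegral.norm_integral_le_of_norm_le_const hb
    _ < ε := by
        rw [abs_of_nonneg hba, div_mul_eq_mul_div, div_lt_iff₀ (by linarith)]
        nlinarith

noncomputable instance aux_matrix_enorm (N : ℕ) : ENormedAddCommMonoid (Matrix (Fin N) (Fin N) ℝ) :=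
  inferInstanceAs (ENormedAddCommMonoid (Fin N → Fin N → ℝ))

lemma aux_integral_entry {N : ℕ} {f : ℝ → Matrix (Fin N) (Fin N) ℝ} {a b : ℝ}
    (hf : IntervalIntegrable f volume a b) (i j : Fin N) :
    (∫ t in a..b, f t) i j = ∫ t in a..b, f t i j := by
  have h := (((ContinuousLinearMap.proj (R := ℝ) (φ := fun _ : Fin N => ℝ) j).comp
      (ContinuousLinearMap.proj (R := ℝ) (φ := fun _ : Fin N => Fin N → ℝ) i)
      : Matrix (Fin N) (Fin N) ℝ →L[ℝ] ℝ)).intervalIntegral_comp_comm hf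
  exact h.symm

lemma aux_entry_mul_bound {N : ℕ} (U M : Matrix (Fin N) (Fin N) ℝ) {C : ℝ} (hC : 0 ≤ C)
    (hU : ∀ i j, |U i j| ≤ C) (i j : Fin N) : |(U * M) i j| ≤ N * C * ‖M‖ := by
  rw [Matrix.mul_apply]
  calc |∑ k, U i k * M k j| ≤ ∑ k, |U i k * M k j| := Finset.abs_sum_le_sum_abs _ _
    _ ≤ ∑ _k : Fin N, C * ‖M‖ := by
        refine Finset.sum_le_sum fun k _ => ?_
        rw [abs_mul]
        exact mul_le_mul (hU i k) (M.norm_entry_le_entrywise_sup_norm) (abs_nonneg _) hC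
    _ = N * C * ‖M‖ := by simp [mul_assoc]

/-- For fixed `x ∈ (0, π]`, the only continuous solution of the homogeneous
integral equation `Δ(y) + ∫₀ˣ Δ(t)·F(t,y) dt = 0` on `[0,x]` is `Δ ≡ 0`. -/
theorem homogeneous_integral_equation_trivial
    (N : ℕ) (hN : 1 ≤ N)
    (P : ℝ → Matrix (Fin N) (Fin N) ℝ) (A B 𝒜 ℬ : Matrix (Fin N) (Fin N) ℝ)
    (hP : ContinuousOn P (Set.Icc 0 Real.pi))
    (hPsymm : ∀ x ∈ Set.Icc (0:ℝ) Real.pi, (P x)ᵀ = P x)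
    (hAB : B * Aᵀ = A * Bᵀ) (hAB' : ℬ * 𝒜ᵀ = 𝒜 * ℬᵀ)
    (hrkAB : (Matrix.fromCols A B).rank = N)
    (hrkAB' : (Matrix.fromCols 𝒜 ℬ).rank = N)
    -- `(φ n)` is an L²-orthogonal, complete system of eigenfunctions with eigenvalues `ev n`
    (φ : ℕ → ℝ → (Fin N → ℝ)) (ev : ℕ → ℝ) (c : ℕ → ℝ)
    (hφC : ∀ n, ContDiff ℝ 2 (φ n))
    (hφne : ∀ n, ∃ x ∈ Set.Icc (0:ℝ) Real.pi, φ n x ≠ 0)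
    (hφeq : ∀ n, ∀ x ∈ Set.Icc (0:ℝ) Real.pi,
      -(deriv (deriv (φ n)) x) + P x *ᵥ φ n x = ev n • φ n x)
    (hφbc0 : ∀ n, B *ᵥ deriv (φ n) 0 + A *ᵥ φ n 0 = 0)
    (hφbcπ : ∀ n, ℬ *ᵥ deriv (φ n) Real.pi + 𝒜 *ᵥ φ n Real.pi = 0)
    (horth : ∀ m n : ℕ, m ≠ n → ∫ x in (0:ℝ)..Real.pi, φ m x ⬝ᵥ φ n x = 0)
    (htotal : ∀ f : ℝ → Fin N → ℝ, ContinuousOn f (Set.Icc 0 Real.pi) →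
      (∀ n, ∫ x in (0:ℝ)..Real.pi, f x ⬝ᵥ φ n x = 0) →
      ∀ x ∈ Set.Icc (0:ℝ) Real.pi, f x = 0)
    (hc : ∀ n, 0 < 1 + c n * ∫ x in (0:ℝ)..Real.pi, φ n x ⬝ᵥ φ n x)
    -- `F(x,y) = ∑ n, c n • φ n x ⬝ (φ n y)ᵀ`, converging uniformly, with `F` of class C²
    (F : ℝ → ℝ → Matrix (Fin N) (Fin N) ℝ)
    (hFsum : ∀ x ∈ Set.Icc (0:ℝ) Real.pi, ∀ y ∈ Set.Icc (0:ℝ) Real.pi,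
      HasSum (fun n => c n • Matrix.vecMulVec (φ n x) (φ n y)) (F x y))
    (hFunif : TendstoUniformlyOn
      (fun (s : Finset ℕ) (p : ℝ × ℝ) => ∑ n ∈ s, c n • Matrix.vecMulVec (φ n p.1) (φ n p.2))
      (fun p => F p.1 p.2) Filter.atTop (Set.Icc 0 Real.pi ×ˢ Set.Icc 0 Real.pi))
    (hFC : ContDiff ℝ 2 (Function.uncurry F))
    (x : ℝ) (hx : x ∈ Set.Ioc (0:ℝ) Real.pi)
    (Δ : ℝ → Matrix (Fin N) (Fin N) ℝ) (hΔC : ContinuousOn Δ (Set.Icc 0 x))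
    (hΔ : ∀ y ∈ Set.Icc (0:ℝ) x, Δ y + (∫ t in (0:ℝ)..x, Δ t * F t y) = 0) :
    ∀ y ∈ Set.Icc (0:ℝ) x, Δ y = 0 := by
  obtain ⟨hx0, hxπ⟩ := hx
  have hπ0 : (0:ℝ) < Real.pi := Real.pi_pos
  have hsub : Icc (0:ℝ) x ⊆ Icc 0 Real.pi := Icc_subset_Icc le_rfl hxπ
  have hφcont : ∀ n, Continuous (φ n) := fun n => (hφC n).continuous
  have hφe : ∀ (n : ℕ) (j : Fin N), Continuous fun t => φ n t j :=
    fun n j => (continuous_apply j).comp (hφcont n)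
  have hΔe : ∀ i j : Fin N, ContinuousOn (fun t => Δ t i j) (Icc 0 x) := fun i j =>
    continuousOn_pi.1 (continuousOn_pi.1 hΔC i) j
  -- interval integrability of continuous-on functions
  have hint : ∀ g : ℝ → ℝ, ContinuousOn g (Icc 0 x) → IntervalIntegrable g volume 0 x := by
    intro g hg
    apply ContinuousOn.intervalIntegrable
    rwa [uIcc_of_le hx0.le]
  -- bound on the entries of Δ
  obtain ⟨C₀, hC₀⟩ := isCompact_Icc.exists_bound_of_continuousOn hΔC
  set C₁ : ℝ := max C₀ 0 with hC₁def
  have hC₁0 : 0 ≤ C₁ := le_max_right _ _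
  have hC₁ : ∀ t ∈ Icc (0:ℝ) x, ∀ i j, |Δ t i j| ≤ C₁ := by
    intro t ht i j
    have h1 : ‖Δ t i j‖ ≤ ‖Δ t‖ := (Δ t).norm_entry_le_entrywise_sup_norm
    rw [Real.norm_eq_abs] at h1
    exact h1.trans ((hC₀ t ht).trans (le_max_left _ _))
  -- positivity of the L² norms of the φ n
  set ν : ℕ → ℝ := fun n => ∫ t in (0:ℝ)..Real.pi, φ n t ⬝ᵥ φ n t with hνdef
  have hνnn : ∀ n, 0 ≤ ν n := fun n =>
    intervalIntegral.integral_nonneg hπ0.le fun t _ =>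
      Finset.sum_nonneg fun k _ => mul_self_nonneg _
  have hνpos : ∀ n, 0 < ν n := by
    intro n
    rcases (hνnn n).lt_or_eq with h | h
    · exact h
    · exfalso
      obtain ⟨x₀, hx₀, hne⟩ := hφne n
      refine hne (htotal (φ n) (hφcont n).continuousOn (fun m => ?_) x₀ hx₀)
      rcases eq_or_ne n m with rfl | hnm
      · exact h.symm
      · exact horth n m hnm
  -- the coefficients a n i
  set a : ℕ → Fin N → ℝ := fun n i => ∫ t in (0:ℝ)..x, Δ t i ⬝ᵥ φ n t with hadef
  have hdotc : ∀ (i : Fin N) (n : ℕ), ContinuousOn (fun t => Δ t i ⬝ᵥ φ n t) (Icc 0 x) := by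
    intro i n
    simp only [dotProduct]
    exact continuousOn_finset_sum _ fun k _ => (hΔe i k).mul (hφe n k).continuousOn
  -- partial sums of the series for F
  set ps2 : Finset ℕ → ℝ → ℝ → Matrix (Fin N) (Fin N) ℝ :=
    fun s t y => ∑ n ∈ s, c n • Matrix.vecMulVec (φ n t) (φ n y) with hps2
  have hkey : ∀ ε > 0, ∀ᶠ s in (atTop : Filter (Finset ℕ)),
      ∀ t ∈ Icc (0:ℝ) Real.pi, ∀ y ∈ Icc (0:ℝ) Real.pi, ‖ps2 s t y - F t y‖ < ε := by
    intro ε hε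
    filter_upwards [Metric.tendstoUniformlyOn_iff.1 hFunif ε hε] with s hs t ht y hy
    have h := hs (t, y) (Set.mk_mem_prod ht hy)
    rw [dist_eq_norm] at h
    rw [norm_sub_rev]
    exact h
  -- continuity of F in the first variable
  have hFyc : ∀ y : ℝ, Continuous fun t => F t y := by
    intro y
    exact hFC.continuous.comp (continuous_id.prodMk continuous_const)
  have hFye : ∀ (y : ℝ) (k j : Fin N), Continuous fun t => F t y k j := fun y k j =>
    continuous_pi_iff.1 (continuous_pi_iff.1 (hFyc y) k) j
  have hmulC : ∀ y, ContinuousOn (fun t => Δ t * F t y) (Icc 0 x) := by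
    intro y
    apply continuousOn_pi.2
    intro i
    apply continuousOn_pi.2
    intro j
    simp only [Matrix.mul_apply]
    exact continuousOn_finset_sum _ fun k _ => (hΔe i k).mul (hFye y k j).continuousOn
  have hmulInt : ∀ y, IntervalIntegrable (fun t => Δ t * F t y) volume 0 x := by
    intro y
    apply ContinuousOn.intervalIntegrable
    rw [uIcc_of_le hx0.le]
    exact hmulC y
  have hmulCe : ∀ (y : ℝ) (i j : Fin N),
      ContinuousOn (fun t => (Δ t * F t y) i j) (Icc 0 x) := by
    intro y i j
    simp only [Matrix.mul_apply]
    exact continuousOn_finset_sum _ fun k _ => (hΔe i k).mul (hFye y k j).continuousOn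
  -- the entrywise integral equation
  have hEntry : ∀ y ∈ Icc (0:ℝ) x, ∀ i j : Fin N,
      Δ y i j = -∫ t in (0:ℝ)..x, (Δ t * F t y) i j := by
    intro y hy i j
    have h := congrFun (congrFun (hΔ y hy) i) j
    simp only [Matrix.add_apply, Matrix.zero_apply] at h
    rw [aux_integral_entry (hmulInt y) i j] at h
    linarith
  -- entrywise formula for Δ * partial sums
  have hps_entry : ∀ (s : Finset ℕ) (t y : ℝ) (i j : Fin N),
      (Δ t * ps2 s t y) i j = ∑ n ∈ s, c n * (Δ t i ⬝ᵥ φ n t) * φ n y j := by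
    intro s t y i j
    rw [Matrix.mul_apply]
    simp only [hps2, Matrix.sum_apply, Matrix.smul_apply, Matrix.vecMulVec_apply,
      smul_eq_mul, dotProduct, Finset.mul_sum, Finset.sum_mul]
    rw [Finset.sum_comm]
    exact Finset.sum_congr rfl fun n _ => Finset.sum_congr rfl fun k _ => by ring
  -- value of the integral of Δ * partial sums
  have hint_ps : ∀ y ∈ Icc (0:ℝ) x, ∀ (i j : Fin N) (s : Finset ℕ),
      ∫ t in (0:ℝ)..x, (Δ t * ps2 s t y) i j = ∑ n ∈ s, c n * a n i * φ n y j := by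
    intro y _ i j s
    have e : (fun t => (Δ t * ps2 s t y) i j)
        = fun t => ∑ n ∈ s, (c n * φ n y j) * (Δ t i ⬝ᵥ φ n t) := by
      funext t
      rw [hps_entry]
      exact Finset.sum_congr rfl fun n _ => by ring
    rw [e, intervalIntegral.integral_finset_sum]
    · refine Finset.sum_congr rfl fun n _ => ?_
      rw [intervalIntegral.integral_const_mul]
      simp only [hadef]
      ring
    · intro n _
      exact hint _ (continuousOn_const.mul (hdotc i n))
  have hcont_ps : ∀ (y : ℝ) (i j : Fin N) (s : Finset ℕ),
      ContinuousOn (fun t => (Δ t * ps2 s t y) i j) (Icc 0 x) := by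
    intro y i j s
    have e : (fun t => (Δ t * ps2 s t y) i j)
        = fun t => ∑ n ∈ s, c n * (Δ t i ⬝ᵥ φ n t) * φ n y j := funext fun t => hps_entry s t y i j
    rw [e]
    exact continuousOn_finset_sum _ fun n _ =>
      ((continuousOn_const.mul (hdotc i n)).mul continuousOn_const)
  -- Step A : HasSum identity for the entries of the integral equation
  have hstepA : ∀ y ∈ Icc (0:ℝ) x, ∀ i j : Fin N,
      HasSum (fun n => c n * a n i * φ n y j) (∫ t in (0:ℝ)..x, (Δ t * F t y) i j) := by
    intro y hy i j
    have hunif : TendstoUniformlyOn (fun s t => (Δ t * ps2 s t y) i j)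
        (fun t => (Δ t * F t y) i j) atTop (Icc 0 x) := by
      rw [Metric.tendstoUniformlyOn_iff]
      intro ε hε
      have hδ : 0 < ε / (N * C₁ + 1) := by positivity
      filter_upwards [hkey _ hδ] with s hs t ht
      have hb : ‖ps2 s t y - F t y‖ < ε / (N * C₁ + 1) := hs t (hsub ht) y (hsub hy)
      have h2 : |(Δ t * (ps2 s t y - F t y)) i j| ≤ N * C₁ * ‖ps2 s t y - F t y‖ :=
        aux_entry_mul_bound _ _ hC₁0 (fun i' j' => hC₁ t ht i' j') i j
      rw [Real.dist_eq]
      have e : (Δ t * F t y) i j - (Δ t * ps2 s t y) i j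
          = -((Δ t * (ps2 s t y - F t y)) i j) := by
        rw [Matrix.mul_sub, Matrix.sub_apply]
        ring
      rw [e, abs_neg]
      calc |(Δ t * (ps2 s t y - F t y)) i j| ≤ N * C₁ * ‖ps2 s t y - F t y‖ := h2
        _ ≤ (N * C₁) * (ε / (N * C₁ + 1)) := by
            apply mul_le_mul_of_nonneg_left hb.le
            positivity
        _ < (N * C₁ + 1) * (ε / (N * C₁ + 1)) := by
            apply mul_lt_mul_of_pos_right (lt_add_one _) hδ
        _ = ε := by
            rw [mul_comm, div_mul_cancel₀ _ (by positivity : (N : ℝ) * C₁ + 1 ≠ 0)]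
    have htend := aux_tendsto_integral_of_unif hx0.le
      (fun s => hint _ (hcont_ps y i j s)) (hint _ (hmulCe y i j)) hunif
    have e : (fun s : Finset ℕ => ∫ t in (0:ℝ)..x, (Δ t * ps2 s t y) i j)
        = fun s => ∑ n ∈ s, c n * a n i * φ n y j := funext fun s => hint_ps y hy i j s
    rw [e] at htend
    exact htend
  -- Step B : second summation identity
  have hstepB : ∀ i j : Fin N,
      HasSum (fun n => c n * a n i * ∫ y in (0:ℝ)..x, φ n y j * Δ y i j)
        (-∫ y in (0:ℝ)..x, Δ y i j * Δ y i j) := by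
    intro i j
    have hunifB : TendstoUniformlyOn (fun s y => ∑ n ∈ s, c n * a n i * φ n y j)
        (fun y => -Δ y i j) atTop (Icc 0 x) := by
      rw [Metric.tendstoUniformlyOn_iff]
      intro ε hε
      have hδ : 0 < ε / (N * C₁ * x + 1) := by positivity
      filter_upwards [hkey _ hδ] with s hs y hy
      rw [Real.dist_eq]
      have e1 : ∑ n ∈ s, c n * a n i * φ n y j = ∫ t in (0:ℝ)..x, (Δ t * ps2 s t y) i j :=
        (hint_ps y hy i j s).symm
      have e2 : -Δ y i j = ∫ t in (0:ℝ)..x, (Δ t * F t y) i j := by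
        rw [hEntry y hy i j]; ring
      rw [e1, e2]
      have e3 : (∫ t in (0:ℝ)..x, (Δ t * F t y) i j) - ∫ t in (0:ℝ)..x, (Δ t * ps2 s t y) i j
          = ∫ t in (0:ℝ)..x, ((Δ t * (F t y - ps2 s t y)) i j) := by
        rw [← intervalIntegral.integral_sub (hint _ (hmulCe y i j)) (hint _ (hcont_ps y i j s))]
        congr 1
        funext t
        rw [Matrix.mul_sub, Matrix.sub_apply]
      rw [e3]
      have hb : ∀ t ∈ Set.uIoc (0:ℝ) x, ‖(Δ t * (F t y - ps2 s t y)) i j‖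
          ≤ N * C₁ * (ε / (N * C₁ * x + 1)) := by
        intro t ht
        rw [Set.uIoc_of_le hx0.le] at ht
        have ht' : t ∈ Icc (0:ℝ) x := Set.Ioc_subset_Icc_self ht
        have hb1 : ‖F t y - ps2 s t y‖ < ε / (N * C₁ * x + 1) := by
          rw [norm_sub_rev]
          exact hs t (hsub ht') y (hsub hy)
        have h2 : |(Δ t * (F t y - ps2 s t y)) i j| ≤ N * C₁ * ‖F t y - ps2 s t y‖ :=
          aux_entry_mul_bound _ _ hC₁0 (fun i' j' => hC₁ t ht' i' j') i j
        rw [Real.norm_eq_abs]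
        refine h2.trans ?_
        apply mul_le_mul_of_nonneg_left hb1.le
        positivity
      calc |∫ t in (0:ℝ)..x, (Δ t * (F t y - ps2 s t y)) i j|
          ≤ (N * C₁ * (ε / (N * C₁ * x + 1))) * |x - 0| :=
            intervalIntegral.norm_integral_le_of_norm_le_const hb
        _ = (N * C₁ * x) * (ε / (N * C₁ * x + 1)) := by
            rw [sub_zero, abs_of_nonneg hx0.le]; ring
        _ < (N * C₁ * x + 1) * (ε / (N * C₁ * x + 1)) :=
            mul_lt_mul_of_pos_right (lt_add_one _) hδ
        _ = ε := by
            rw [mul_comm, div_mul_cancel₀ _ (by positivity : (N : ℝ) * C₁ * x + 1 ≠ 0)]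
    have hunifB2 : TendstoUniformlyOn (fun s y => (∑ n ∈ s, c n * a n i * φ n y j) * Δ y i j)
        (fun y => -(Δ y i j * Δ y i j)) atTop (Icc 0 x) := by
      rw [Metric.tendstoUniformlyOn_iff]
      intro ε hε
      have hδ : 0 < ε / (C₁ + 1) := by positivity
      filter_upwards [Metric.tendstoUniformlyOn_iff.1 hunifB _ hδ] with s hs y hy
      have h1 := hs y hy
      rw [Real.dist_eq] at h1 ⊢
      have e : -(Δ y i j * Δ y i j) - (∑ n ∈ s, c n * a n i * φ n y j) * Δ y i j
          = (-Δ y i j - ∑ n ∈ s, c n * a n i * φ n y j) * Δ y i j := by ring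
      rw [e, abs_mul]
      calc |(-Δ y i j - ∑ n ∈ s, c n * a n i * φ n y j)| * |Δ y i j|
          ≤ (ε / (C₁ + 1)) * C₁ :=
            mul_le_mul h1.le (hC₁ y hy i j) (abs_nonneg _) hδ.le
        _ < (ε / (C₁ + 1)) * (C₁ + 1) := mul_lt_mul_of_pos_left (lt_add_one _) hδ
        _ = ε := div_mul_cancel₀ _ (by positivity : C₁ + 1 ≠ 0)
    have hGi : ∀ s : Finset ℕ,
        IntervalIntegrable (fun y => (∑ n ∈ s, c n * a n i * φ n y j) * Δ y i j) volume 0 x := by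
      intro s
      refine hint _ (ContinuousOn.mul ?_ (hΔe i j))
      exact continuousOn_finset_sum _ fun n _ => continuousOn_const.mul (hφe n j).continuousOn
    have hgi : IntervalIntegrable (fun y => -(Δ y i j * Δ y i j)) volume 0 x :=
      hint _ (((hΔe i j).mul (hΔe i j)).neg)
    have htend := aux_tendsto_integral_of_unif hx0.le hGi hgi hunifB2
    have e4 : (fun s : Finset ℕ => ∫ y in (0:ℝ)..x, (∑ n ∈ s, c n * a n i * φ n y j) * Δ y i j)
        = fun s => ∑ n ∈ s, c n * a n i * ∫ y in (0:ℝ)..x, φ n y j * Δ y i j := by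
      funext s
      have e : (fun y => (∑ n ∈ s, c n * a n i * φ n y j) * Δ y i j)
          = fun y => ∑ n ∈ s, (c n * a n i) * (φ n y j * Δ y i j) := by
        funext y
        rw [Finset.sum_mul]
        exact Finset.sum_congr rfl fun n _ => by ring
      rw [e, intervalIntegral.integral_finset_sum]
      · exact Finset.sum_congr rfl fun n _ => by
          rw [intervalIntegral.integral_const_mul]
      · intro n _
        exact hint _ (continuousOn_const.mul (((hφe n j).continuousOn).mul (hΔe i j)))
    rw [e4, intervalIntegral.integral_neg] at htend
    exact htend
  -- the identities for a n i as sums of componentwise integrals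
  have hintφΔ : ∀ (n : ℕ) (i k : Fin N),
      IntervalIntegrable (fun t => φ n t k * Δ t i k) volume 0 x :=
    fun n i k => hint _ (((hφe n k).continuousOn).mul (hΔe i k))
  have hasum : ∀ (n : ℕ) (i : Fin N), a n i = ∑ j, ∫ y in (0:ℝ)..x, φ n y j * Δ y i j := by
    intro n i
    simp only [hadef, dotProduct]
    rw [intervalIntegral.integral_finset_sum (f := fun j t => Δ t i j * φ n t j) (fun j _ => hint _ ((hΔe i j).mul (hφe n j).continuousOn))]
    exact Finset.sum_congr rfl fun j _ =>
      intervalIntegral.integral_congr fun t _ => mul_comm _ _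
  -- define L and S
  set L : ℕ → ℝ := fun n => ∑ i, (a n i) ^ 2 with hLdef
  set S : ℝ := ∑ i, ∫ y in (0:ℝ)..x, Δ y i ⬝ᵥ Δ y i with hSdef
  have hdotint : ∀ i : Fin N, (∫ y in (0:ℝ)..x, Δ y i ⬝ᵥ Δ y i)
      = ∑ j, ∫ y in (0:ℝ)..x, Δ y i j * Δ y i j := by
    intro i
    simp only [dotProduct]
    rw [intervalIntegral.integral_finset_sum (f := fun j y => Δ y i j * Δ y i j) (fun j _ => hint _ ((hΔe i j).mul (hΔe i j)))]
  have hstepB' : HasSum (fun n => c n * L n) (-S) := by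
    have h1 : ∀ i : Fin N, HasSum (fun n => c n * (a n i) ^ 2)
        (-(∫ y in (0:ℝ)..x, Δ y i ⬝ᵥ Δ y i)) := by
      intro i
      have h2 := hasSum_sum (s := (Finset.univ : Finset (Fin N)))
        (f := fun j n => c n * a n i * ∫ y in (0:ℝ)..x, φ n y j * Δ y i j)
        (a := fun j => -∫ y in (0:ℝ)..x, Δ y i j * Δ y i j)
        (fun j _ => hstepB i j)
      have e1 : (fun n => ∑ j, c n * a n i * ∫ y in (0:ℝ)..x, φ n y j * Δ y i j)
          = fun n => c n * (a n i) ^ 2 := by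
        funext n
        rw [← Finset.mul_sum, ← hasum n i]
        ring
      have e2 : (∑ j : Fin N, -∫ y in (0:ℝ)..x, Δ y i j * Δ y i j)
          = -(∫ y in (0:ℝ)..x, Δ y i ⬝ᵥ Δ y i) := by
        rw [hdotint i, ← Finset.sum_neg_distrib]
      rw [e1, e2] at h2
      exact h2
    have h3 := hasSum_sum (s := (Finset.univ : Finset (Fin N)))
      (f := fun i n => c n * (a n i) ^ 2)
      (a := fun i => -(∫ y in (0:ℝ)..x, Δ y i ⬝ᵥ Δ y i))
      (fun i _ => h1 i)
    have e3 : (fun n => ∑ i, c n * (a n i) ^ 2) = fun n => c n * L n := by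
      funext n
      rw [hLdef, ← Finset.mul_sum]
    have e4 : (∑ i : Fin N, -(∫ y in (0:ℝ)..x, Δ y i ⬝ᵥ Δ y i)) = -S := by
      rw [hSdef, ← Finset.sum_neg_distrib]
    rw [e3, e4] at h3
    exact h3
  -- Bessel inequality
  have hBessel : ∀ (i : Fin N) (s : Finset ℕ),
      ∑ n ∈ s, (a n i) ^ 2 / ν n ≤ ∫ y in (0:ℝ)..x, Δ y i ⬝ᵥ Δ y i := by
    intro i s
    set p : ℝ → Fin N → ℝ := fun y => ∑ n ∈ s, (a n i / ν n) • φ n y with hpdef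
    have hpc : ∀ k : Fin N, Continuous fun y => p y k := by
      intro k
      simp only [hpdef, Finset.sum_apply, Pi.smul_apply, smul_eq_mul]
      exact continuous_finset_sum _ fun n _ => continuous_const.mul (hφe n k)
    -- pointwise expansions
    have hdp : ∀ y : ℝ, Δ y i ⬝ᵥ p y = ∑ n ∈ s, (a n i / ν n) * (Δ y i ⬝ᵥ φ n y) := by
      intro y
      simp only [dotProduct, hpdef, Finset.sum_apply, Pi.smul_apply, smul_eq_mul,
        Finset.mul_sum, Finset.sum_mul]
      rw [Finset.sum_comm]
      exact Finset.sum_congr rfl fun n _ => Finset.sum_congr rfl fun k _ => by ring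
    have hpp : ∀ y : ℝ, p y ⬝ᵥ p y
        = ∑ n ∈ s, ∑ m ∈ s, (a n i / ν n) * (a m i / ν m) * (φ n y ⬝ᵥ φ m y) := by
      intro y
      simp only [dotProduct, hpdef, Finset.sum_apply, Pi.smul_apply, smul_eq_mul,
        Finset.mul_sum, Finset.sum_mul]
      rw [Finset.sum_comm]
      refine Finset.sum_congr rfl fun n _ => ?_
      rw [Finset.sum_comm]
      exact Finset.sum_congr rfl fun m _ => Finset.sum_congr rfl fun k _ => by ring
    -- continuity facts
    have hφφc : ∀ m n : ℕ, Continuous fun t => φ m t ⬝ᵥ φ n t := by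
      intro m n
      simp only [dotProduct]
      exact continuous_finset_sum _ fun k _ => (hφe m k).mul (hφe n k)
    have hppc : Continuous fun y => p y ⬝ᵥ p y := by
      simp only [dotProduct]
      exact continuous_finset_sum _ fun k _ => (hpc k).mul (hpc k)
    have hddc : ContinuousOn (fun y => Δ y i ⬝ᵥ Δ y i) (Icc 0 x) := by
      simp only [dotProduct]
      exact continuousOn_finset_sum _ fun k _ => (hΔe i k).mul (hΔe i k)
    have hdpc : ContinuousOn (fun y => Δ y i ⬝ᵥ p y) (Icc 0 x) := by
      simp only [dotProduct]
      exact continuousOn_finset_sum _ fun k _ => (hΔe i k).mul (hpc k).continuousOn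
    -- nonnegativity
    have key : 0 ≤ (∫ y in (0:ℝ)..x, (Δ y i - p y) ⬝ᵥ (Δ y i - p y))
        + ∫ y in x..Real.pi, p y ⬝ᵥ p y := by
      apply add_nonneg
      · apply intervalIntegral.integral_nonneg hx0.le
        intro u _
        exact Finset.sum_nonneg fun k _ => mul_self_nonneg _
      · apply intervalIntegral.integral_nonneg hxπ
        intro u _
        exact Finset.sum_nonneg fun k _ => mul_self_nonneg _
    -- expand the first integral
    have e2 : (∫ y in (0:ℝ)..x, (Δ y i - p y) ⬝ᵥ (Δ y i - p y))
        = (∫ y in (0:ℝ)..x, Δ y i ⬝ᵥ Δ y i) - 2 * (∫ y in (0:ℝ)..x, Δ y i ⬝ᵥ p y)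
          + ∫ y in (0:ℝ)..x, p y ⬝ᵥ p y := by
      have e1 : (fun y => (Δ y i - p y) ⬝ᵥ (Δ y i - p y))
          = fun y => (Δ y i ⬝ᵥ Δ y i - 2 * (Δ y i ⬝ᵥ p y)) + p y ⬝ᵥ p y := by
        funext y
        simp only [dotProduct, Pi.sub_apply, Finset.mul_sum]
        rw [← Finset.sum_sub_distrib, ← Finset.sum_add_distrib]
        exact Finset.sum_congr rfl fun k _ => by ring
      rw [e1]
      rw [intervalIntegral.integral_add (f := fun y => Δ y i ⬝ᵥ Δ y i - 2 * (Δ y i ⬝ᵥ p y)) (g := fun y => p y ⬝ᵥ p y) (hint _ (hddc.sub (continuousOn_const.mul hdpc)))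
        (hppc.intervalIntegrable _ _)]
      rw [intervalIntegral.integral_sub (f := fun y => Δ y i ⬝ᵥ Δ y i) (g := fun y => 2 * (Δ y i ⬝ᵥ p y)) (hint _ hddc) (hint _ (continuousOn_const.mul hdpc))]
      rw [intervalIntegral.integral_const_mul]
    have e3 : (∫ y in (0:ℝ)..x, Δ y i ⬝ᵥ p y) = ∑ n ∈ s, (a n i / ν n) * a n i := by
      rw [show (fun y => Δ y i ⬝ᵥ p y)
          = fun y => ∑ n ∈ s, (a n i / ν n) * (Δ y i ⬝ᵥ φ n y) from funext hdp]
      rw [intervalIntegral.integral_finset_sum (f := fun n y => (a n i / ν n) * (Δ y i ⬝ᵥ φ n y))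
        (fun n _ => hint _ (continuousOn_const.mul (hdotc i n)))]
      refine Finset.sum_congr rfl fun n _ => ?_
      rw [intervalIntegral.integral_const_mul]
    have e4 : (∫ y in (0:ℝ)..x, p y ⬝ᵥ p y) + (∫ y in x..Real.pi, p y ⬝ᵥ p y)
        = ∫ y in (0:ℝ)..Real.pi, p y ⬝ᵥ p y :=
      intervalIntegral.integral_add_adjacent_intervals (hppc.intervalIntegrable _ _)
        (hppc.intervalIntegrable _ _)
    have e5 : (∫ y in (0:ℝ)..Real.pi, p y ⬝ᵥ p y)
        = ∑ n ∈ s, (a n i / ν n) ^ 2 * ν n := by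
      rw [show (fun y => p y ⬝ᵥ p y)
          = fun y => ∑ n ∈ s, ∑ m ∈ s, (a n i / ν n) * (a m i / ν m) * (φ n y ⬝ᵥ φ m y)
          from funext hpp]
      rw [intervalIntegral.integral_finset_sum
        (f := fun n y => ∑ m ∈ s, (a n i / ν n) * (a m i / ν m) * (φ n y ⬝ᵥ φ m y)) (fun n _ =>
        (continuous_finset_sum _ fun m _ =>
          continuous_const.mul (hφφc n m)).intervalIntegrable _ _)]
      refine Finset.sum_congr rfl fun n hn => ?_
      rw [intervalIntegral.integral_finset_sum
        (f := fun m y => (a n i / ν n) * (a m i / ν m) * (φ n y ⬝ᵥ φ m y)) (fun m _ =>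
        (continuous_const.mul (hφφc n m)).intervalIntegrable _ _)]
      rw [Finset.sum_eq_single_of_mem n hn]
      · rw [intervalIntegral.integral_const_mul]
        simp only [hνdef]
        ring
      · intro m hm hmn
        rw [intervalIntegral.integral_const_mul, horth n m (fun h => hmn h.symm), mul_zero]
    have e6 : ∑ n ∈ s, (a n i / ν n) ^ 2 * ν n = ∑ n ∈ s, (a n i) ^ 2 / ν n :=
      Finset.sum_congr rfl fun n _ => by
        have := (hνpos n).ne'
        field_simp
    have e7 : ∑ n ∈ s, (a n i / ν n) * a n i = ∑ n ∈ s, (a n i) ^ 2 / ν n :=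
      Finset.sum_congr rfl fun n _ => by
        have := (hνpos n).ne'
        field_simp
    rw [e2, e3] at key
    linarith [key, e4, e5, e6, e7]
  -- assemble everything
  have hLnn : ∀ n, 0 ≤ L n := fun n => Finset.sum_nonneg fun i _ => sq_nonneg _
  have hsumle : ∀ s : Finset ℕ, ∑ n ∈ s, L n / ν n ≤ S := by
    intro s
    calc ∑ n ∈ s, L n / ν n = ∑ n ∈ s, ∑ i, (a n i) ^ 2 / ν n :=
          Finset.sum_congr rfl fun n _ => by rw [hLdef, Finset.sum_div]
      _ = ∑ i, ∑ n ∈ s, (a n i) ^ 2 / ν n := Finset.sum_comm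
      _ ≤ ∑ i, ∫ y in (0:ℝ)..x, Δ y i ⬝ᵥ Δ y i := Finset.sum_le_sum fun i _ => hBessel i s
      _ = S := hSdef.symm
  have hsummable : Summable (fun n => L n / ν n) :=
    summable_of_sum_le (fun n => div_nonneg (hLnn n) (hνpos n).le) hsumle
  have hTle : (∑' n, L n / ν n) ≤ S := Summable.tsum_le_of_sum_le hsummable hsumle
  have hsum2 : HasSum (fun n => L n / ν n + c n * L n) ((∑' n, L n / ν n) + -S) :=
    hsummable.hasSum.add hstepB'
  have hnn : ∀ m, 0 ≤ L m / ν m + c m * L m := by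
    intro m
    have h1 : 0 < 1 + c m * ν m := hc m
    have e : L m / ν m + c m * L m = L m * ((1 + c m * ν m) / ν m) := by
      have := (hνpos m).ne'
      field_simp
    rw [e]
    exact mul_nonneg (hLnn m) (div_nonneg h1.le (hνpos m).le)
  have hterm0 : ∀ n, L n / ν n + c n * L n = 0 := by
    intro n
    have hle := le_hasSum hsum2 n fun m _ => hnn m
    exact le_antisymm (by linarith) (hnn n)
  have haz : ∀ n i, a n i = 0 := by
    intro n i
    have hL0 : L n = 0 := by
      have h := hterm0 n
      have h1 : 0 < 1 + c n * ν n := hc n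
      have e : L n / ν n + c n * L n = L n * ((1 + c n * ν n) / ν n) := by
        have := (hνpos n).ne'
        field_simp
      rw [e] at h
      rcases mul_eq_zero.1 h with h' | h'
      · exact h'
      · exact absurd h' (ne_of_gt (div_pos h1 (hνpos n)))
    have h1 : ∑ i, (a n i) ^ 2 = 0 := by rw [← hL0, hLdef]
    have h2 := (Finset.sum_eq_zero_iff_of_nonneg fun i _ => sq_nonneg (a n i)).1 h1 i
      (Finset.mem_univ i)
    exact pow_eq_zero_iff two_ne_zero |>.1 h2
  intro y hy
  funext i j
  show Δ y i j = (0 : Matrix (Fin N) (Fin N) ℝ) i j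
  rw [Matrix.zero_apply]
  have hterm : (fun n : ℕ => c n * a n i * φ n y j) = fun _ => 0 := by
    funext n
    rw [haz n i]
    ring
  have h0 : HasSum (fun n : ℕ => c n * a n i * φ n y j) 0 := by
    rw [hterm]
    exact hasSum_zero
  have hi0 : (∫ t in (0:ℝ)..x, (Δ t * F t y) i j) = 0 := (hstepA y hy i j).unique h0
  rw [hEntry y hy i j, hi0, neg_zero]
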